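/- Let A be a local ring with maximal ideal m and residue field k = A/m, and let M be a left A[x]-module which is finitely generated as an A-module. Then M is a local A[x]-module (has a unique maximal A[x]-submodule) if and only if M/mM is a local k[x]-module. -/

import Mathlib

open Polynomial

/-- Let `A` be a (possibly non-commutative) local ring with maximal ideal `m` (the two-sided
ideal of non-units) and residue (skew) field `K = A/m`, encoded by a surjective ring
homomorphism `π : A → K` whose kernel is exactly the set of non-units.  Let `M` be a left
`A[x]`-module, finitely generated over `A` (acting via the constants `C a ∈ A[x]`), and let
`Mbar` be its reduction `M/mM`: a `K[x]`-module together with a surjective additive map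
`q : M → Mbar` which is semilinear with respect to the reduction `A[x] → K[x]` and whose kernel
is exactly `mM` (the additive group generated by the elements `a • u` with `a` a non-unit of
`A`).  Then `M` is a local `A[x]`-module (it has a unique maximal `A[x]`-submodule, i.e. a
unique coatom in its submodule lattice) if and only if `M/mM` is a local `K[x]`-module. -/
theorem local_module_iff_reduction_local
    {A : Type*} [Ring A] {K : Type*} [DivisionRing K]
    (π : A →+* K) (hπsurj : Function.Surjective π)
    (hπker : ∀ a : A, π a = 0 ↔ ¬ IsUnit a)
    {M : Type*} [AddCommGroup M] [Module A[X] M]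
    {Mbar : Type*} [AddCommGroup Mbar] [Module K[X] Mbar]
    (q : M →+ Mbar) (hqsurj : Function.Surjective q)
    (hqsemi : ∀ (p : A[X]) (v : M), q (p • v) = (p.map π) • q v)
    (hqker : ∀ v : M, q v = 0 ↔
      v ∈ AddSubgroup.closure {w : M | ∃ a : A, ¬ IsUnit a ∧ ∃ u : M, w = (C a : A[X]) • u})
    -- `M` is finitely generated as an `A`-module
    (hfin : ∃ s : Finset M, ∀ v : M,
      v ∈ AddSubgroup.closure {w : M | ∃ a : A, ∃ u ∈ s, w = (C a : A[X]) • u}) :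
    (∃! P : Submodule A[X] M, IsCoatom P) ↔ (∃! Q : Submodule K[X] Mbar, IsCoatom Q) := by
  classical
  obtain ⟨s, hs⟩ := hfin
  set S : Set M := {w : M | ∃ a : A, ¬ IsUnit a ∧ ∃ u : M, w = (C a : A[X]) • u} with hSdef
  -- the set of non-units is closed under left multiplication
  have hmul_left : ∀ (b a : A), ¬ IsUnit a → ¬ IsUnit (b * a) := by
    intro b a ha
    rw [← hπker] at ha ⊢
    rw [map_mul, ha, mul_zero]
  -- the additive closure of S is stable under the A[X]-action
  have haux : ∀ (p : A[X]) (a : A), ¬ IsUnit a → ∀ u : M,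
      (p * C a) • u ∈ AddSubgroup.closure S := by
    intro p a ha
    induction p using Polynomial.induction_on' with
    | add p₁ p₂ h1 h2 =>
      intro u
      rw [add_mul, add_smul]
      exact add_mem (h1 u) (h2 u)
    | monomial n b =>
      intro u
      have hmono : ((monomial n b : A[X]) * C a) = C (b * a) * X ^ n := by
        rw [C_mul_X_pow_eq_monomial, monomial_mul_C]
      rw [hmono, mul_smul]
      exact AddSubgroup.subset_closure ⟨b * a, hmul_left b a ha, _, rfl⟩
  have hN0smul : ∀ (p : A[X]) (v : M), v ∈ AddSubgroup.closure S →
      p • v ∈ AddSubgroup.closure S := by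
    intro p v hv
    refine AddSubgroup.closure_induction ?_ ?_ ?_ ?_ hv
    · rintro x ⟨a, ha, u, rfl⟩
      rw [← mul_smul]
      exact haux p a ha u
    · rw [smul_zero]; exact zero_mem _
    · intro x y hx hy px py
      rw [smul_add]; exact add_mem px py
    · intro x hx px
      rw [smul_neg]; exact neg_mem px
  -- N0 = mM as an A[X]-submodule
  let N0 : Submodule A[X] M :=
    { carrier := AddSubgroup.closure S
      add_mem' := fun h1 h2 => add_mem h1 h2
      zero_mem' := zero_mem _
      smul_mem' := fun p {v} hv => hN0smul p v hv }
  have memN0 : ∀ v : M, v ∈ N0 ↔ v ∈ AddSubgroup.closure S := fun v => Iff.rfl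
  -- A-module structure on M via constants
  letI instAM : Module A M := Module.compHom M (C : A →+* A[X])
  have hsmulAdef : ∀ (a : A) (v : M), a • v = (C a : A[X]) • v := fun a v => rfl
  -- M is spanned over A by s
  have hspan : ∀ v : M, v ∈ Submodule.span A (↑s : Set M) := by
    intro v
    have hle : AddSubgroup.closure {w : M | ∃ a : A, ∃ u ∈ s, w = (C a : A[X]) • u} ≤
        (Submodule.span A (↑s : Set M)).toAddSubgroup := by
      refine (AddSubgroup.closure_le _).mpr ?_
      rintro w ⟨a, u, hu, rfl⟩
      exact Submodule.smul_mem _ a (Submodule.subset_span hu)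
    exact hle (hs v)
  -- restriction of an A[X]-submodule to an A-submodule
  let resA : Submodule A[X] M → Submodule A M := fun P =>
    { carrier := P
      add_mem' := fun h1 h2 => P.add_mem h1 h2
      zero_mem' := P.zero_mem
      smul_mem' := fun a {v} hv => P.smul_mem (C a) hv }
  -- Nakayama: every coatom contains N0
  have hcoatom_le : ∀ P : Submodule A[X] M, IsCoatom P → N0 ≤ P := by
    intro P hP
    by_contra hPN
    have hsup : P ⊔ N0 = ⊤ := hP.2 _ (left_lt_sup.mpr hPN)
    set PA := resA P with hPAdef
    have key : ∀ n (t : Finset M),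
        t.card ≤ n → (∀ v : M, v ∈ PA ⊔ Submodule.span A (↑t : Set M)) →
        ∀ v : M, v ∈ P := by
      intro n
      induction n with
      | zero =>
        intro t ht hall v
        have ht0 : t = ∅ := Finset.card_eq_zero.mp (Nat.le_zero.mp ht)
        have hv := hall v
        rw [ht0] at hv
        simp at hv; exact hv
      | succ n ih =>
        intro t hcard hall
        rcases Finset.eq_empty_or_nonempty t with rfl | ⟨u, hu⟩
        · intro v
          have hv := hall v
          simp at hv; exact hv
        · -- T : combinations of elements of t with coefficients in m
          let T : Submodule A M :=
            { carrier := {v : M | ∃ f : M → A, (∀ i, π (f i) = 0) ∧ v = ∑ i ∈ t, f i • i}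
              zero_mem' := ⟨fun _ => 0, fun i => map_zero π, by simp⟩
              add_mem' := by
                rintro x y ⟨f, hf, rfl⟩ ⟨g, hg, rfl⟩
                refine ⟨fun i => f i + g i, fun i => by rw [map_add, hf i, hg i, add_zero], ?_⟩
                rw [← Finset.sum_add_distrib]
                exact Finset.sum_congr rfl fun i _ => (add_smul (f i) (g i) i).symm
              smul_mem' := by
                rintro a x ⟨f, hf, rfl⟩
                refine ⟨fun i => a * f i, fun i => by rw [map_mul, hf i, mul_zero], ?_⟩
                rw [Finset.smul_sum]
                exact Finset.sum_congr rfl fun i _ => (mul_smul a (f i) i).symm }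
          have memT : ∀ v : M, v ∈ T ↔
              ∃ f : M → A, (∀ i, π (f i) = 0) ∧ v = ∑ i ∈ t, f i • i := fun v => Iff.rfl
          have hN0T : ∀ w : M, w ∈ N0 → w ∈ PA ⊔ T := by
            intro w hw
            refine AddSubgroup.closure_induction ?_ ?_ ?_ ?_ (hw : w ∈ AddSubgroup.closure S)
            · rintro x ⟨a, ha, u', rfl⟩
              have hu' := hall u'
              rw [Submodule.mem_sup] at hu'
              obtain ⟨p, hp, z, hz, heq⟩ := hu'
              obtain ⟨g, -, hg⟩ := Submodule.mem_span_finset.mp hz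
              have h1 : (C a : A[X]) • p ∈ PA := PA.smul_mem a hp
              have h2 : (C a : A[X]) • z ∈ T := by
                refine ⟨fun i => a * g i, fun i => by
                  rw [map_mul, (hπker a).mpr ha, zero_mul], ?_⟩
                rw [← hsmulAdef, ← hg, Finset.smul_sum]
                exact Finset.sum_congr rfl fun i _ => (mul_smul a (g i) i).symm
              have heq2 : (C a : A[X]) • u' = (C a : A[X]) • p + (C a : A[X]) • z := by
                rw [← heq, smul_add]
              rw [heq2]
              exact Submodule.add_mem _ (Submodule.mem_sup_left h1) (Submodule.mem_sup_right h2)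
            · exact zero_mem _
            · intro x y hx hy px py
              exact add_mem px py
            · intro x hx px
              exact neg_mem px
          -- write u as p + z with p ∈ P, z ∈ T
          have huPT : u ∈ PA ⊔ T := by
            have hmem : (u : M) ∈ P ⊔ N0 := by rw [hsup]; exact Submodule.mem_top
            rw [Submodule.mem_sup] at hmem
            obtain ⟨p, hp, w, hw, heq⟩ := hmem
            rw [← heq]
            exact Submodule.add_mem _ (Submodule.mem_sup_left hp) (hN0T w hw)
          rw [Submodule.mem_sup] at huPT
          obtain ⟨p, hp, z, hz, heq⟩ := huPT
          obtain ⟨f, hf, hzeq⟩ := hz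
          have hunit : IsUnit (1 - f u) := by
            by_contra hnu
            have h1 : π (1 - f u) = 0 := (hπker _).mpr hnu
            have h2 : π (1 - f u) = 1 := by rw [map_sub, map_one, hf u, sub_zero]
            rw [h1] at h2
            exact one_ne_zero h2.symm
          have hzz : z = f u • u + ∑ i ∈ t.erase u, f i • i := by
            rw [hzeq, ← Finset.add_sum_erase t (fun i => f i • i) hu]
          have hsum : (1 - f u) • u = p + ∑ i ∈ t.erase u, f i • i := by
            have h4 : u = p + (f u • u + ∑ i ∈ t.erase u, f i • i) := by rw [← hzz, heq]
            rw [sub_smul, one_smul]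
            nth_rewrite 1 [h4]
            abel
          have hmem1 : (1 - f u) • u ∈ PA ⊔ Submodule.span A (↑(t.erase u) : Set M) := by
            rw [hsum]
            refine Submodule.add_mem _ (Submodule.mem_sup_left hp) (Submodule.sum_mem _ ?_)
            intro i hi
            exact Submodule.mem_sup_right
              (Submodule.smul_mem _ _ (Submodule.subset_span (Finset.mem_coe.mpr hi)))
          have hmem2 : u ∈ PA ⊔ Submodule.span A (↑(t.erase u) : Set M) := by
            have h3 : ((hunit.unit⁻¹ : Aˣ) : A) • ((1 - f u) • u) = u := by
              rw [smul_smul, IsUnit.val_inv_mul, one_smul]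
            have h5 := Submodule.smul_mem (PA ⊔ Submodule.span A (↑(t.erase u) : Set M))
              ((hunit.unit⁻¹ : Aˣ) : A) hmem1
            rwa [h3] at h5
          have hall' : ∀ v : M, v ∈ PA ⊔ Submodule.span A (↑(t.erase u) : Set M) := by
            intro v
            have hle : Submodule.span A (↑t : Set M) ≤
                PA ⊔ Submodule.span A (↑(t.erase u) : Set M) := by
              rw [Submodule.span_le]
              intro i hi
              rcases eq_or_ne i u with rfl | hne
              · exact hmem2
              · exact Submodule.mem_sup_right (Submodule.subset_span
                  (Finset.mem_coe.mpr (Finset.mem_erase.mpr ⟨hne, Finset.mem_coe.mp hi⟩)))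
            exact (sup_le le_sup_left hle) (hall v)
          exact ih (t.erase u)
            (Nat.lt_succ_iff.mp (lt_of_lt_of_le (Finset.card_erase_lt_of_mem hu) hcard)) hall'
    exact hP.1 (Submodule.eq_top_iff'.mpr
      (key s.card s le_rfl (fun v => Submodule.mem_sup_right (hspan v))))
  -- the correspondence between submodules
  have hmapsurj : Function.Surjective (Polynomial.map π : A[X] → K[X]) :=
    Polynomial.map_surjective π hπsurj
  let Pof : Submodule K[X] Mbar → Submodule A[X] M := fun Q =>
    { carrier := q ⁻¹' Q
      zero_mem' := by
        show q 0 ∈ Q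
        rw [map_zero]; exact Q.zero_mem
      add_mem' := by
        intro a b ha hb
        show q (a + b) ∈ Q
        rw [map_add]
        exact Q.add_mem ha hb
      smul_mem' := by
        intro p v hv
        show q (p • v) ∈ Q
        rw [hqsemi]
        exact Q.smul_mem _ hv }
  let Qof : Submodule A[X] M → Submodule K[X] Mbar := fun P =>
    { carrier := q '' P
      zero_mem' := ⟨0, P.zero_mem, map_zero q⟩
      add_mem' := by
        rintro a b ⟨x, hx, rfl⟩ ⟨y, hy, rfl⟩
        exact ⟨x + y, P.add_mem hx hy, map_add q x y⟩
      smul_mem' := by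
        intro pb v hv
        obtain ⟨x, hx, rfl⟩ := hv
        obtain ⟨p, rfl⟩ := hmapsurj pb
        exact ⟨p • x, P.smul_mem p hx, hqsemi p x⟩ }
  have memPof : ∀ (Q : Submodule K[X] Mbar) (v : M), v ∈ Pof Q ↔ q v ∈ Q := fun Q v => Iff.rfl
  have memQof : ∀ (P : Submodule A[X] M) (w : Mbar), w ∈ Qof P ↔ ∃ v ∈ P, q v = w :=
    fun P w => Iff.rfl
  have hQP : ∀ Q, Qof (Pof Q) = Q := by
    intro Q
    ext w
    rw [memQof]
    constructor
    · rintro ⟨x, hx, rfl⟩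
      exact hx
    · intro hw
      obtain ⟨x, rfl⟩ := hqsurj w
      exact ⟨x, hw, rfl⟩
  have hPofTop : Pof ⊤ = ⊤ := by
    ext v
    simp [memPof]
  have hQofTop : Qof ⊤ = ⊤ := by
    ext w
    rw [memQof]
    simp only [Submodule.mem_top, iff_true]
    obtain ⟨v, rfl⟩ := hqsurj w
    exact ⟨v, trivial, rfl⟩
  have hN0Pof : ∀ Q, N0 ≤ Pof Q := by
    intro Q v hv
    rw [memPof, (hqker v).mpr hv]
    exact Q.zero_mem
  have hPQ : ∀ P : Submodule A[X] M, N0 ≤ P → Pof (Qof P) = P := by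
    intro P hNP
    ext v
    rw [memPof, memQof]
    constructor
    · rintro ⟨w, hw, hqw⟩
      have h0 : q (v - w) = 0 := by rw [map_sub, hqw, sub_self]
      have hvw : v - w ∈ N0 := (hqker _).mp h0
      have hmem : (v - w) + w ∈ P := P.add_mem (hNP hvw) hw
      rwa [sub_add_cancel] at hmem
    · intro hv
      exact ⟨v, hv, rfl⟩
  have hQofmono : Monotone Qof := by
    intro P1 P2 h w hw
    rw [memQof] at hw ⊢
    obtain ⟨v, hv, rfl⟩ := hw
    exact ⟨v, h hv, rfl⟩
  have hcoQ : ∀ Q : Submodule K[X] Mbar, IsCoatom Q → IsCoatom (Pof Q) := by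
    intro Q hQ
    constructor
    · intro hPt
      apply hQ.1
      rw [← hQP Q, hPt, hQofTop]
    · intro P' hlt
      have hN0P' : N0 ≤ P' := le_trans (hN0Pof Q) hlt.le
      have h1 : Q ≤ Qof P' := by
        rw [← hQP Q]
        exact hQofmono hlt.le
      have hne : Q ≠ Qof P' := by
        intro h
        exact hlt.ne (by rw [h, hPQ P' hN0P'])
      have htop : Qof P' = ⊤ := hQ.2 _ (lt_of_le_of_ne h1 hne)
      rw [← hPQ P' hN0P', htop, hPofTop]
  have hcoP : ∀ P : Submodule A[X] M, IsCoatom P → IsCoatom (Qof P) := by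
    intro P hP
    have hNP := hcoatom_le P hP
    constructor
    · intro hQt
      apply hP.1
      rw [← hPQ P hNP, hQt, hPofTop]
    · intro Q' hlt
      have h1 : P ≤ Pof Q' := by
        rw [← hPQ P hNP]
        intro v hv
        rw [memPof] at hv ⊢
        exact hlt.le hv
      have hne : P ≠ Pof Q' := by
        intro h
        exact hlt.ne (by rw [h, hQP])
      have htop : Pof Q' = ⊤ := hP.2 _ (lt_of_le_of_ne h1 hne)
      rw [← hQP Q', htop, hQofTop]
  constructor
  · rintro ⟨P, hP, huniq⟩
    refine ⟨Qof P, hcoP P hP, ?_⟩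
    intro Q hQ
    have h1 : Pof Q = P := huniq _ (hcoQ Q hQ)
    rw [← hQP Q, h1]
  · rintro ⟨Q, hQ, huniq⟩
    refine ⟨Pof Q, hcoQ Q hQ, ?_⟩
    intro P hP
    have h1 : Qof P = Q := huniq _ (hcoP P hP)
    rw [← hPQ P (hcoatom_le P hP), h1]
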